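/- arXiv:2512.14948 — 3 statements merged into one kernel-verified Lean document; each statement's English description precedes it below -/
import Mathlib

section
/- Let n ≥ 2 and a, b ≥ 3 be integers and let e be a primitive n-th root of unity. Suppose e^(a+b−1) = 1, (e^(a−2) − 1)(e^a − 1) = 0, and (e^b − 1)(e^(b−2) − 1) = 0. Then n = 3, and 3 divides a − 2, and 3 divides b − 2. -/
theorem stmt_5 (n a b : ℕ) (hn : 2 ≤ n) (ha : 3 ≤ a) (hb : 3 ≤ b)
    (e : ℂ) (he : IsPrimitiveRoot e n)
    (h1 : e ^ (a + b - 1) = 1)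
    (h2 : (e ^ (a - 2) - 1) * (e ^ a - 1) = 0)
    (h3 : (e ^ b - 1) * (e ^ (b - 2) - 1) = 0) :
    n = 3 ∧ 3 ∣ a - 2 ∧ 3 ∣ b - 2 := by
  have hd1 : n ∣ a + b - 1 := (he.pow_eq_one_iff_dvd _).mp h1
  have h2' : n ∣ a - 2 ∨ n ∣ a := by
    rcases mul_eq_zero.mp h2 with h | h
    · exact Or.inl ((he.pow_eq_one_iff_dvd _).mp (sub_eq_zero.mp h))
    · exact Or.inr ((he.pow_eq_one_iff_dvd _).mp (sub_eq_zero.mp h))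
  have h3' : n ∣ b ∨ n ∣ b - 2 := by
    rcases mul_eq_zero.mp h3 with h | h
    · exact Or.inl ((he.pow_eq_one_iff_dvd _).mp (sub_eq_zero.mp h))
    · exact Or.inr ((he.pow_eq_one_iff_dvd _).mp (sub_eq_zero.mp h))
  rcases h2' with hA | hA <;> rcases h3' with hB | hB
  · -- n ∣ a-2, n ∣ b : n ∣ 1, contradiction
    have h := Nat.dvd_sub hd1 (Nat.dvd_add hA hB)
    rw [show a + b - 1 - (a - 2 + b) = 1 from by omega] at h
    exact absurd (Nat.dvd_one.mp (by assumption)) (by omega)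
  · -- n ∣ a-2, n ∣ b-2 : n ∣ 3
    have h := Nat.dvd_sub hd1 (Nat.dvd_add hA hB)
    rw [show a + b - 1 - (a - 2 + (b - 2)) = 3 from by omega] at h
    have hn3 : n = 3 := by
      rcases Nat.Prime.eq_one_or_self_of_dvd Nat.prime_three n h with h' | h' <;> omega
    subst hn3
    exact ⟨rfl, hA, hB⟩
  · have h := Nat.dvd_sub hd1 (Nat.dvd_add hA hB)
    rw [show a + b - 1 - (a + b) = 0 from by omega] at h
    have h0 := Nat.dvd_sub (Nat.dvd_add hA hB) hd1
    rw [show a + b - (a + b - 1) = 1 from by omega] at h0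
    exact absurd (Nat.dvd_one.mp (by assumption)) (by omega)
  · have h := Nat.dvd_sub (Nat.dvd_add hA hB) hd1
    rw [show a + (b - 2) - (a + b - 1) = 0 from by omega] at h
    have h0 := Nat.dvd_sub hd1 (Nat.dvd_add hA hB)
    rw [show a + b - 1 - (a + (b - 2)) = 1 from by omega] at h0
    exact absurd (Nat.dvd_one.mp (by assumption)) (by omega)
end

section
/- Let a ≥ 3 and b ≥ 1 be integers and let e be a primitive (a−1)·b-th root of unity. Suppose integers i, j satisfy 0 ≤ i ≤ a, 0 ≤ j ≤ b, and e^(i·b) = e^j. Then (i, j) is one of (0,0), (a−1,0), (1,b), (a,b). -/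
theorem stmt_11 (a b : ℕ) (ha : 3 ≤ a) (hb : 1 ≤ b)
    (e : ℂ) (he : IsPrimitiveRoot e ((a - 1) * b))
    (i j : ℕ) (hi : i ≤ a) (hj : j ≤ b) (h : e ^ (i * b) = e ^ j) :
    (i, j) = (0, 0) ∨ (i, j) = (a - 1, 0) ∨ (i, j) = (1, b) ∨ (i, j) = (a, b) := by
  have hNpos : 0 < (a - 1) * b := by
    have : 2 ≤ a - 1 := by omega
    exact Nat.mul_pos (by omega) hb
  have hne : e ≠ 0 := he.ne_zero (by omega)
  have hz : e ^ (((i * b : ℕ) : ℤ) - (j : ℕ)) = 1 := by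
    rw [zpow_sub₀ hne, zpow_natCast, zpow_natCast, h,
      div_self (pow_ne_zero _ hne)]
  have hdvd : (((a - 1) * b : ℕ) : ℤ) ∣ ((i * b : ℕ) : ℤ) - (j : ℕ) :=
    (he.zpow_eq_one_iff_dvd _).mp hz
  obtain ⟨k, hk⟩ := hdvd
  have hb1 : (1 : ℤ) ≤ b := by exact_mod_cast hb
  have ha3 : (3 : ℤ) ≤ a := by exact_mod_cast ha
  have hiZ : (i : ℤ) ≤ a := by exact_mod_cast hi
  have hjZ : (j : ℤ) ≤ b := by exact_mod_cast hj
  have hcast : ((a - 1 : ℕ) : ℤ) = (a : ℤ) - 1 := by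
    have h1 : 1 ≤ a := by omega
    push_cast [h1]; ring
  push_cast [hcast] at hk
  -- hk : (i:ℤ)*b - j = ((a:ℤ)-1)*b * k
  have hi0 : (0 : ℤ) ≤ i := Int.ofNat_nonneg i
  have hj0 : (0 : ℤ) ≤ j := Int.ofNat_nonneg j
  have hk0 : k = 0 ∨ k = 1 := by
    rcases lt_trichotomy k 0 with h1 | h1 | h1
    · exfalso
      have hkle : k ≤ -1 := by omega
      have : ((a : ℤ) - 1) * b * k ≤ ((a : ℤ) - 1) * b * (-1) :=
        mul_le_mul_of_nonneg_left hkle (by nlinarith)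
      nlinarith [mul_nonneg hi0 (le_trans zero_le_one hb1)]
    · left; exact h1
    · right
      by_contra hne2
      have hk2 : 2 ≤ k := by omega
      have : ((a : ℤ) - 1) * b * 2 ≤ ((a : ℤ) - 1) * b * k :=
        mul_le_mul_of_nonneg_left hk2 (by nlinarith)
      nlinarith [mul_le_mul_of_nonneg_right hiZ (le_trans zero_le_one hb1)]
  rcases hk0 with rfl | rfl
  · -- i*b = j
    have hjib : (i : ℤ) * b = j := by linarith [hk]
    have hi1 : i ≤ 1 := by
      by_contra hgt
      have : (2 : ℤ) ≤ i := by exact_mod_cast by omega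
      nlinarith
    interval_cases i
    · left
      norm_num at hjib
      have : j = 0 := by exact_mod_cast hjib.symm
      simp [this]
    · right; right; left
      norm_num at hjib
      have : j = b := by exact_mod_cast hjib.symm
      simp [this]
  · -- i*b - j = (a-1)*b
    have h2 : (i : ℤ) * b = ((a : ℤ) - 1) * b + j := by linarith [hk]
    have hil : a - 1 ≤ i := by
      by_contra hlt
      have h3 : i + 2 ≤ a := by omega
      have h4 : (i : ℤ) + 2 ≤ a := by exact_mod_cast h3
      nlinarith
    have hcases : i = a - 1 ∨ i = a := by omega
    rcases hcases with rfl | rfl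
    · right; left
      have hj0' : (j : ℤ) = 0 := by
        have := h2
        rw [hcast] at this
        linarith
      have : j = 0 := by exact_mod_cast hj0'
      simp [this]
    · right; right; right
      have hjb : (j : ℤ) = b := by nlinarith
      have : j = b := by exact_mod_cast hjb
      simp [this]
end

section
/- Let a, b ≥ 3 be integers, set N = (a−1)(b−1) + 1, and let e be a primitive N-th root of unity. Suppose integers i, j satisfy 0 ≤ i ≤ a, 0 ≤ j ≤ b, and e^((i−1)(b−1) + j) = 1. Then (i, j) is one of (0, b−1), (1, 0), (a−1, b), (a, 1). -/
theorem stmt_12 (a b : ℤ) (ha : 3 ≤ a) (hb : 3 ≤ b)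
    (e : ℂ) (he : IsPrimitiveRoot e ((a - 1) * (b - 1) + 1).toNat)
    (i j : ℤ) (hi0 : 0 ≤ i) (hia : i ≤ a) (hj0 : 0 ≤ j) (hjb : j ≤ b)
    (h : e ^ ((i - 1) * (b - 1) + j) = 1) :
    (i, j) = (0, b - 1) ∨ (i, j) = (1, 0) ∨ (i, j) = (a - 1, b) ∨ (i, j) = (a, 1) := by
  have hN : (0:ℤ) ≤ (a - 1) * (b - 1) + 1 := by nlinarith
  have hdvd : ((a - 1) * (b - 1) + 1 : ℤ) ∣ (i - 1) * (b - 1) + j := by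
    have := (he.zpow_eq_one_iff_dvd ((i - 1) * (b - 1) + j)).mp h
    rwa [Int.toNat_of_nonneg hN] at this
  obtain ⟨m, hm⟩ := hdvd
  have hm0 : 0 ≤ m := by nlinarith
  have hm1 : m ≤ 1 := by nlinarith
  interval_cases m
  · -- (i-1)*(b-1)+j = 0
    have hi1 : i ≤ 1 := by nlinarith
    have : i = 0 ∨ i = 1 := by omega
    rcases this with rfl | rfl
    · left; have : j = b - 1 := by linarith [hm]
      simp [this]
    · right; left; have : j = 0 := by nlinarith [hm]
      simp [this]
  · -- (i-1)*(b-1)+j = N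
    have hi1 : a - 1 ≤ i := by nlinarith
    have : i = a - 1 ∨ i = a := by omega
    rcases this with rfl | rfl
    · right; right; left; have : j = b := by nlinarith [hm]
      simp [this]
    · right; right; right; have : j = 1 := by nlinarith [hm]
      simp [this]
end
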